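/- arXiv:1203.1376 — 7 statements merged into one kernel-verified Lean document; each statement's English description precedes it below -/
import Mathlib

section
/- Case (a) of the s.d.o.f. region: Assume additionally NE ≤ r0 − r1 and NE ≤ r0 − r2. Then the convex hull of P = {p0, p1, p2, p3, p4} in ℝ² equals the polytope {(d1, d2) ∈ ℝ² : 0 ≤ d1 ≤ r1 − NE, 0 ≤ d2 ≤ r2 − NE, d1 + d2 ≤ r0 − 2·NE}. -/
private lemma seg_horiz (u v w t : ℝ) (huv : u ≤ v) (ht : t ∈ Set.Icc u v) :
    ((t, w) : ℝ × ℝ) ∈ segment ℝ (u, w) (v, w) := by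
  rw [← segment_eq_Icc huv] at ht
  obtain ⟨α, β, hα, hβ, hαβ, he⟩ := ht
  simp only [smul_eq_mul] at he
  refine ⟨α, β, hα, hβ, hαβ, ?_⟩
  simp only [Prod.smul_mk, Prod.mk_add_mk, Prod.mk.injEq, smul_eq_mul]
  constructor
  · linarith
  · linear_combination w * hαβ

private lemma seg_vert (u v w t : ℝ) (huv : u ≤ v) (ht : t ∈ Set.Icc u v) :
    ((w, t) : ℝ × ℝ) ∈ segment ℝ (w, u) (w, v) := by
  rw [← segment_eq_Icc huv] at ht
  obtain ⟨α, β, hα, hβ, hαβ, he⟩ := ht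
  simp only [smul_eq_mul] at he
  refine ⟨α, β, hα, hβ, hαβ, ?_⟩
  simp only [Prod.smul_mk, Prod.mk_add_mk, Prod.mk.injEq, smul_eq_mul]
  constructor
  · linear_combination w * hαβ
  · linarith

private lemma seg_line (c u v t : ℝ) (huv : u ≤ v) (ht : t ∈ Set.Icc u v) :
    ((c - t, t) : ℝ × ℝ) ∈ segment ℝ (c - u, u) (c - v, v) := by
  rw [← segment_eq_Icc huv] at ht
  obtain ⟨α, β, hα, hβ, hαβ, he⟩ := ht
  simp only [smul_eq_mul] at he
  refine ⟨α, β, hα, hβ, hαβ, ?_⟩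
  simp only [Prod.smul_mk, Prod.mk_add_mk, Prod.mk.injEq, smul_eq_mul]
  constructor
  · linear_combination c * hαβ - he
  · linear_combination he

/-- Case (a) of the s.d.o.f. region: if `NE ≤ r0 - r1` and `NE ≤ r0 - r2`, the convex
hull of the five corner points equals the polymatroid
`{(d1,d2) : 0 ≤ d1 ≤ r1 - NE, 0 ≤ d2 ≤ r2 - NE, d1 + d2 ≤ r0 - 2 NE}`. -/
theorem sdof_region_case_a (r0 r1 r2 NE : ℝ)
    (hNE : 0 ≤ NE) (h1 : r1 ≤ r0) (h2 : r2 ≤ r0) (h0 : r0 ≤ r1 + r2)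
    (ha1 : NE ≤ r0 - r1) (ha2 : NE ≤ r0 - r2) :
    convexHull ℝ ({((0 : ℝ), (0 : ℝ)),
        (max (r1 - NE) 0, 0),
        (0, max (r2 - NE) 0),
        (max (r1 - NE) 0, max (r0 - r1 - NE) 0),
        (max (r0 - r2 - NE) 0, max (r2 - NE) 0)} : Set (ℝ × ℝ)) =
      {d : ℝ × ℝ | 0 ≤ d.1 ∧ d.1 ≤ r1 - NE ∧ 0 ≤ d.2 ∧ d.2 ≤ r2 - NE ∧
        d.1 + d.2 ≤ r0 - 2 * NE} := by
  have ha0 : (0:ℝ) ≤ r1 - NE := by linarith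
  have hb0 : (0:ℝ) ≤ r2 - NE := by linarith
  rw [max_eq_left ha0, max_eq_left hb0,
    max_eq_left (by linarith : (0:ℝ) ≤ r0 - r1 - NE),
    max_eq_left (by linarith : (0:ℝ) ≤ r0 - r2 - NE)]
  apply Set.Subset.antisymm
  · apply convexHull_min
    · intro p hp
      simp only [Set.mem_insert_iff, Set.mem_singleton_iff] at hp
      rcases hp with h | h | h | h | h <;> subst h <;>
        refine ⟨?_, ?_, ?_, ?_, ?_⟩ <;> simp <;> linarith
    · intro p hp q hq α β hα hβ hαβ
      obtain ⟨hp1, hp2, hp3, hp4, hp5⟩ := hp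
      obtain ⟨hq1, hq2, hq3, hq4, hq5⟩ := hq
      simp only [Set.mem_setOf_eq, Prod.fst_add, Prod.snd_add, Prod.smul_fst,
        Prod.smul_snd, smul_eq_mul]
      have k1 : α * (r1 - NE) + β * (r1 - NE) = r1 - NE := by linear_combination (r1 - NE) * hαβ
      have k2 : α * (r2 - NE) + β * (r2 - NE) = r2 - NE := by linear_combination (r2 - NE) * hαβ
      have k3 : α * (r0 - 2 * NE) + β * (r0 - 2 * NE) = r0 - 2 * NE := by
        linear_combination (r0 - 2 * NE) * hαβ
      refine ⟨?_, ?_, ?_, ?_, ?_⟩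
      · have := mul_nonneg hα hp1; have := mul_nonneg hβ hq1; linarith
      · have := mul_le_mul_of_nonneg_left hp2 hα
        have := mul_le_mul_of_nonneg_left hq2 hβ; linarith
      · have := mul_nonneg hα hp3; have := mul_nonneg hβ hq3; linarith
      · have := mul_le_mul_of_nonneg_left hp4 hα
        have := mul_le_mul_of_nonneg_left hq4 hβ; linarith
      · have := mul_le_mul_of_nonneg_left hp5 hα
        have := mul_le_mul_of_nonneg_left hq5 hβ
        have e5p : α * (p.1 + p.2) = α * p.1 + α * p.2 := by ring
        have e5q : β * (q.1 + q.2) = β * q.1 + β * q.2 := by ring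
        linarith
  · intro d hd
    obtain ⟨x, y⟩ := d
    obtain ⟨hx0, hxa, hy0, hyb, hsum⟩ := hd
    set S : Set (ℝ × ℝ) := {((0 : ℝ), (0 : ℝ)), (r1 - NE, 0), (0, r2 - NE),
      (r1 - NE, r0 - r1 - NE), (r0 - r2 - NE, r2 - NE)} with hS
    have hconv := convex_convexHull ℝ S
    have hA : ((0:ℝ), (0:ℝ)) ∈ convexHull ℝ S := subset_convexHull ℝ S (by simp [hS])
    have hB : ((r1 - NE : ℝ), (0:ℝ)) ∈ convexHull ℝ S := subset_convexHull ℝ S (by simp [hS])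
    have hC : ((0:ℝ), (r2 - NE : ℝ)) ∈ convexHull ℝ S := subset_convexHull ℝ S (by simp [hS])
    have hD : ((r1 - NE : ℝ), (r0 - r1 - NE : ℝ)) ∈ convexHull ℝ S :=
      subset_convexHull ℝ S (by simp [hS])
    have hE : ((r0 - r2 - NE : ℝ), (r2 - NE : ℝ)) ∈ convexHull ℝ S :=
      subset_convexHull ℝ S (by simp [hS])
    have hOy : ((0:ℝ), y) ∈ convexHull ℝ S :=
      hconv.segment_subset hA hC (seg_vert 0 (r2 - NE) 0 y hb0 ⟨hy0, hyb⟩)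
    by_cases hc : y ≤ r0 - r1 - NE
    · have hBD : ((r1 - NE : ℝ), y) ∈ convexHull ℝ S :=
        hconv.segment_subset hB hD (seg_vert 0 (r0 - r1 - NE) (r1 - NE) y (by linarith) ⟨hy0, hc⟩)
      exact hconv.segment_subset hOy hBD (seg_horiz 0 (r1 - NE) y x ha0 ⟨hx0, hxa⟩)
    · push_neg at hc
      have h5 := seg_line (r0 - 2 * NE) (r0 - r1 - NE) (r2 - NE) y (by linarith) ⟨le_of_lt hc, hyb⟩
      have e1 : ((r0 - 2 * NE - (r0 - r1 - NE) : ℝ), (r0 - r1 - NE : ℝ)) =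
          ((r1 - NE : ℝ), (r0 - r1 - NE : ℝ)) := by
        simp only [Prod.mk.injEq, and_true]; ring
      have e2 : ((r0 - 2 * NE - (r2 - NE) : ℝ), (r2 - NE : ℝ)) =
          ((r0 - r2 - NE : ℝ), (r2 - NE : ℝ)) := by
        simp only [Prod.mk.injEq, and_true]; ring
      rw [e1, e2] at h5
      have hDE : ((r0 - 2 * NE - y : ℝ), y) ∈ convexHull ℝ S := hconv.segment_subset hD hE h5
      exact hconv.segment_subset hOy hDE
        (seg_horiz 0 (r0 - 2 * NE - y) y x (by linarith) ⟨hx0, by linarith⟩)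
end

section
/- Case (b) of the s.d.o.f. region: Assume additionally r1 ≤ r2, r0 − r2 ≤ NE ≤ r0 − r1, and NE < r1. Then the convex hull of P = {p0, p1, p2, p3, p4} in ℝ² equals the polytope {(d1, d2) ∈ ℝ² : 0 ≤ d1 ≤ r1 − NE, 0 ≤ d2, and (r1 + r2 − r0)·d1 + (r1 − NE)·d2 ≤ (r1 − NE)·(r2 − NE)}. -/
set_option maxHeartbeats 1000000 in


/-- Case (b) of the s.d.o.f. region: if `r1 ≤ r2`, `r0 - r2 ≤ NE ≤ r0 - r1` and
`NE < r1`, the convex hull of the five corner points equals the polytope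
`{(d1,d2) : 0 ≤ d1 ≤ r1 - NE, 0 ≤ d2,
  (r1 + r2 - r0) d1 + (r1 - NE) d2 ≤ (r1 - NE)(r2 - NE)}`. -/
theorem sdof_region_case_b (r0 r1 r2 NE : ℝ)
    (hNE : 0 ≤ NE) (h1 : r1 ≤ r0) (h2 : r2 ≤ r0) (h0 : r0 ≤ r1 + r2)
    (h12 : r1 ≤ r2) (hb1 : r0 - r2 ≤ NE) (hb2 : NE ≤ r0 - r1) (hb3 : NE < r1) :
    convexHull ℝ ({((0 : ℝ), (0 : ℝ)),
        (max (r1 - NE) 0, 0),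
        (0, max (r2 - NE) 0),
        (max (r1 - NE) 0, max (r0 - r1 - NE) 0),
        (max (r0 - r2 - NE) 0, max (r2 - NE) 0)} : Set (ℝ × ℝ)) =
      {d : ℝ × ℝ | 0 ≤ d.1 ∧ d.1 ≤ r1 - NE ∧ 0 ≤ d.2 ∧
        (r1 + r2 - r0) * d.1 + (r1 - NE) * d.2 ≤ (r1 - NE) * (r2 - NE)} := by
  have ha : (0:ℝ) < r1 - NE := by linarith
  have hbp : (0:ℝ) < r2 - NE := by linarith
  have hc : (0:ℝ) ≤ r0 - r1 - NE := by linarith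
  have hmax1 : max (r1 - NE) 0 = r1 - NE := max_eq_left ha.le
  have hmax2 : max (r2 - NE) 0 = r2 - NE := max_eq_left hbp.le
  have hmax3 : max (r0 - r1 - NE) 0 = r0 - r1 - NE := max_eq_left hc
  have hmax4 : max (r0 - r2 - NE) 0 = (0:ℝ) := max_eq_right (by linarith)
  rw [hmax1, hmax2, hmax3, hmax4]
  set S : Set (ℝ × ℝ) := {((0 : ℝ), (0 : ℝ)), (r1 - NE, 0), (0, r2 - NE),
      (r1 - NE, r0 - r1 - NE), (0, r2 - NE)} with hS
  apply Set.Subset.antisymm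
  · apply convexHull_min
    · intro p hp
      simp only [hS, Set.mem_insert_iff, Set.mem_singleton_iff] at hp
      rcases hp with h|h|h|h|h <;> subst h <;>
        refine ⟨?_, ?_, ?_, ?_⟩ <;> simp only [Set.mem_setOf_eq] <;>
          nlinarith [mul_nonneg ha.le hc]
    · rintro p ⟨hp1, hp2, hp3, hp4⟩ q ⟨hq1, hq2, hq3, hq4⟩ u v hu hv huv
      simp only [Set.mem_setOf_eq, Prod.fst_add, Prod.snd_add, Prod.smul_fst,
        Prod.smul_snd, smul_eq_mul]
      refine ⟨by nlinarith [mul_nonneg hu hp1, mul_nonneg hv hq1], ?_,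
        by nlinarith [mul_nonneg hu hp3, mul_nonneg hv hq3], ?_⟩
      · nlinarith [mul_le_mul_of_nonneg_left hp2 hu, mul_le_mul_of_nonneg_left hq2 hv]
      · have h := add_le_add (mul_le_mul_of_nonneg_left hp4 hu)
          (mul_le_mul_of_nonneg_left hq4 hv)
        have h2 : u * ((r1 - NE) * (r2 - NE)) + v * ((r1 - NE) * (r2 - NE)) =
            (r1 - NE) * (r2 - NE) := by rw [← add_mul, huv, one_mul]
        nlinarith [h, h2]
  · intro d hd
    obtain ⟨hd1, hd2, hd3, hd4⟩ := hd
    have hC : Convex ℝ (convexHull ℝ S) := convex_convexHull ℝ S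
    set t : ℝ := d.1 / (r1 - NE) with htdef
    have ht0 : 0 ≤ t := div_nonneg hd1 ha.le
    have ht1 : t ≤ 1 := (div_le_one ha).mpr hd2
    have hta : t * (r1 - NE) = d.1 := div_mul_cancel₀ d.1 ha.ne'
    -- bottom point
    have hv0 : ((0:ℝ), (0:ℝ)) ∈ convexHull ℝ S := subset_convexHull ℝ S (by simp [hS])
    have hv1 : ((r1 - NE : ℝ), (0:ℝ)) ∈ convexHull ℝ S :=
      subset_convexHull ℝ S (by simp [hS])
    have hv2 : ((0:ℝ), (r2 - NE : ℝ)) ∈ convexHull ℝ S :=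
      subset_convexHull ℝ S (by simp [hS])
    have hv3 : ((r1 - NE : ℝ), (r0 - r1 - NE : ℝ)) ∈ convexHull ℝ S :=
      subset_convexHull ℝ S (by simp [hS])
    have hB : ((d.1, (0:ℝ)) : ℝ × ℝ) ∈ convexHull ℝ S := by
      have := hC hv0 hv1 (by linarith : (0:ℝ) ≤ 1 - t) ht0 (by ring)
      convert this using 1
      ext <;> simp [smul_eq_mul] <;> linarith [hta]
    set top : ℝ := (1 - t) * (r2 - NE) + t * (r0 - r1 - NE) with htopdef
    have hT : ((d.1, top) : ℝ × ℝ) ∈ convexHull ℝ S := by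
      have := hC hv2 hv3 (by linarith : (0:ℝ) ≤ 1 - t) ht0 (by ring)
      convert this using 1
      ext <;> simp [smul_eq_mul] <;> linarith [hta]
    have hdtop : d.2 ≤ top := by
      have hk : r1 + r2 - r0 = (r2 - NE) - (r0 - r1 - NE) := by ring
      rw [hk] at hd4
      have : (r1 - NE) * d.2 ≤ (r1 - NE) * top := by
        have hx : ((r2 - NE) - (r0 - r1 - NE)) * (t * (r1 - NE)) +
            (r1 - NE) * d.2 ≤ (r1 - NE) * (r2 - NE) := by rw [hta]; exact hd4
        nlinarith
      exact le_of_mul_le_mul_left this ha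
    have htop0 : 0 ≤ top := le_trans hd3 hdtop
    by_cases hz : top = 0
    · have hd20 : d.2 = 0 := le_antisymm (hz ▸ hdtop) hd3
      have : d = ((d.1, (0:ℝ)) : ℝ × ℝ) := by ext <;> simp [hd20]
      rw [this]; exact hB
    · have htpos : 0 < top := lt_of_le_of_ne htop0 (Ne.symm hz)
      set s : ℝ := d.2 / top with hsdef
      have hs0 : 0 ≤ s := div_nonneg hd3 htop0
      have hs1 : s ≤ 1 := (div_le_one htpos).mpr hdtop
      have hst : s * top = d.2 := div_mul_cancel₀ d.2 hz
      have := hC hB hT (by linarith : (0:ℝ) ≤ 1 - s) hs0 (by ring)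
      convert this using 1
      ext <;> simp [smul_eq_mul] <;> linarith [hst]
end

section
/- Case (c) of the s.d.o.f. region: Assume additionally r0 − r1 ≤ NE, r0 − r2 ≤ NE, NE < r1, and NE < r2. Then the convex hull of P = {p0, p1, p2, p3, p4} in ℝ² equals the triangle {(d1, d2) ∈ ℝ² : 0 ≤ d1, 0 ≤ d2, and (r2 − NE)·d1 + (r1 − NE)·d2 ≤ (r1 − NE)·(r2 − NE)} (equivalently, d1/(r1−NE) + d2/(r2−NE) ≤ 1). -/
/-- Case (c) of the s.d.o.f. region: if `r0 - r1 ≤ NE`, `r0 - r2 ≤ NE`, `NE < r1`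
and `NE < r2`, the convex hull of the five corner points equals the triangle
`{(d1,d2) : 0 ≤ d1, 0 ≤ d2, (r2 - NE) d1 + (r1 - NE) d2 ≤ (r1 - NE)(r2 - NE)}`. -/
theorem sdof_region_case_c (r0 r1 r2 NE : ℝ)
    (hNE : 0 ≤ NE) (h1 : r1 ≤ r0) (h2 : r2 ≤ r0) (h0 : r0 ≤ r1 + r2)
    (hc1 : r0 - r1 ≤ NE) (hc2 : r0 - r2 ≤ NE) (hc3 : NE < r1) (hc4 : NE < r2) :
    convexHull ℝ ({((0 : ℝ), (0 : ℝ)),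
        (max (r1 - NE) 0, 0),
        (0, max (r2 - NE) 0),
        (max (r1 - NE) 0, max (r0 - r1 - NE) 0),
        (max (r0 - r2 - NE) 0, max (r2 - NE) 0)} : Set (ℝ × ℝ)) =
      {d : ℝ × ℝ | 0 ≤ d.1 ∧ 0 ≤ d.2 ∧
        (r2 - NE) * d.1 + (r1 - NE) * d.2 ≤ (r1 - NE) * (r2 - NE)} := by
  have ha : (0:ℝ) < r1 - NE := by linarith
  have hb : (0:ℝ) < r2 - NE := by linarith
  rw [max_eq_left ha.le, max_eq_left hb.le, max_eq_right (by linarith : r0 - r1 - NE ≤ 0),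
    max_eq_right (by linarith : r0 - r2 - NE ≤ 0)]
  set a := r1 - NE with hadef
  set b := r2 - NE with hbdef
  have hset : ({((0:ℝ),(0:ℝ)), (a,0), (0,b), (a,0), (0,b)} : Set (ℝ×ℝ))
      = {((0:ℝ),(0:ℝ)), (a,0), (0,b)} := by
    ext x; simp only [Set.mem_insert_iff, Set.mem_singleton_iff]; tauto
  rw [hset]
  apply Set.Subset.antisymm
  · apply convexHull_min
    · rintro x (rfl | rfl | rfl)
      · exact ⟨le_refl 0, le_refl 0, by simp; positivity⟩
      · exact ⟨ha.le, le_refl 0, by simp [mul_comm]⟩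
      · exact ⟨le_refl 0, hb.le, by simp⟩
    · intro x hx y hy s t hs ht hst
      obtain ⟨hx1, hx2, hx3⟩ := hx
      obtain ⟨hy1, hy2, hy3⟩ := hy
      refine ⟨?_, ?_, ?_⟩ <;>
        simp only [Prod.fst_add, Prod.snd_add, Prod.smul_fst, Prod.smul_snd, smul_eq_mul]
      · exact add_nonneg (mul_nonneg hs hx1) (mul_nonneg ht hy1)
      · exact add_nonneg (mul_nonneg hs hx2) (mul_nonneg ht hy2)
      · calc b * (s * x.1 + t * y.1) + a * (s * x.2 + t * y.2)
            = s * (b * x.1 + a * x.2) + t * (b * y.1 + a * y.2) := by ring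
          _ ≤ s * (a * b) + t * (a * b) :=
              add_le_add (mul_le_mul_of_nonneg_left hx3 hs)
                (mul_le_mul_of_nonneg_left hy3 ht)
          _ = a * b := by rw [← add_mul, hst, one_mul]
  · intro d hd
    obtain ⟨hd1, hd2, hd3⟩ := hd
    rw [convexHull_insert ⟨(a,0), by simp⟩, convexHull_pair]
    rw [mem_convexJoin]
    set s := d.1 / a with hsdef
    set t := d.2 / b with htdef
    have hs0 : 0 ≤ s := div_nonneg hd1 ha.le
    have ht0 : 0 ≤ t := div_nonneg hd2 hb.le
    have hd1' : d.1 = a * s := by rw [hsdef, mul_div_assoc', eq_div_iff ha.ne', mul_comm]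
    have hd2' : d.2 = b * t := by rw [htdef, mul_div_assoc', eq_div_iff hb.ne', mul_comm]
    have hst1 : s + t ≤ 1 := by
      rw [hsdef, htdef, div_add_div _ _ ha.ne' hb.ne', div_le_one (by positivity)]
      nlinarith
    rcases eq_or_lt_of_le (add_nonneg hs0 ht0) with hc0 | hc0
    · have hs' : s = 0 := by linarith
      have ht' : t = 0 := by linarith
      have hde : d = ((0:ℝ), (0:ℝ)) := by
        ext <;> simp [hd1', hd2', hs', ht']
      exact ⟨(0, 0), rfl, (a, 0), left_mem_segment _ _ _, hde ▸ left_mem_segment _ _ _⟩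
    · set c := s + t with hcdef
      refine ⟨(0, 0), rfl, (s / c) • ((a:ℝ), (0:ℝ)) + (t / c) • ((0:ℝ), b),
        ⟨s / c, t / c, div_nonneg hs0 hc0.le, div_nonneg ht0 hc0.le,
          by rw [← add_div, ← hcdef, div_self hc0.ne'], rfl⟩,
        ⟨1 - c, c, by linarith, hc0.le, by ring, ?_⟩⟩
      have hde : d = (a * s, b * t) := by ext <;> simp [hd1', hd2']
      rw [hde]
      ext
      · simp only [Prod.fst_add, Prod.smul_fst, smul_eq_mul]
        field_simp
        ring
      · simp only [Prod.snd_add, Prod.smul_snd, smul_eq_mul]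
        field_simp
        ring
end

section
/- Rectangle interpretation of the s.d.o.f. region: Let S = {(d1, d2) ∈ ℝ² : there exist real t1, t2 with 0 ≤ t1 ≤ r1, 0 ≤ t2 ≤ r2, t1 + t2 ≤ r0, 0 ≤ d1 ≤ max(t1 − NE, 0), and 0 ≤ d2 ≤ max(t2 − NE, 0)}. Then the convex hull of S equals the convex hull of P = {p0, p1, p2, p3, p4}. -/
set_option maxHeartbeats 1000000

lemma mem5 {q0 q1 q2 q3 q4 d : ℝ × ℝ} {w0 w1 w2 w3 w4 : ℝ}
    (h0 : 0 ≤ w0) (h1 : 0 ≤ w1) (h2 : 0 ≤ w2) (h3 : 0 ≤ w3) (h4 : 0 ≤ w4)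
    (hs : w0 + w1 + w2 + w3 + w4 = 1)
    (hd : d = w0 • q0 + w1 • q1 + w2 • q2 + w3 • q3 + w4 • q4) :
    d ∈ convexHull ℝ ({q0, q1, q2, q3, q4} : Set (ℝ × ℝ)) := by
  subst hd
  have hconv := convex_convexHull ℝ ({q0, q1, q2, q3, q4} : Set (ℝ × ℝ))
  have := hconv.sum_mem (t := Finset.univ) (w := ![w0,w1,w2,w3,w4]) (z := ![q0,q1,q2,q3,q4])
    (by intro i _; fin_cases i <;> assumption)
    (by simp [Fin.sum_univ_five]; linarith)
    (by intro i _; fin_cases i <;> apply subset_convexHull <;> simp [Set.mem_insert_iff])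
  simpa [Fin.sum_univ_five] using this

/-- Rectangle interpretation of the s.d.o.f. region: the convex hull of the union of
rectangles `S` (parameterized by transmit dimensions `(t1, t2)`) equals the convex
hull of the five corner points of Theorem 1. -/
theorem sdof_region_rectangles (r0 r1 r2 NE : ℝ)
    (hNE : 0 ≤ NE) (h1 : r1 ≤ r0) (h2 : r2 ≤ r0) (h0 : r0 ≤ r1 + r2) :
    convexHull ℝ
      {d : ℝ × ℝ | ∃ t1 t2 : ℝ, 0 ≤ t1 ∧ t1 ≤ r1 ∧ 0 ≤ t2 ∧ t2 ≤ r2 ∧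
        t1 + t2 ≤ r0 ∧ 0 ≤ d.1 ∧ d.1 ≤ max (t1 - NE) 0 ∧ 0 ≤ d.2 ∧
        d.2 ≤ max (t2 - NE) 0} =
    convexHull ℝ ({((0 : ℝ), (0 : ℝ)),
        (max (r1 - NE) 0, 0),
        (0, max (r2 - NE) 0),
        (max (r1 - NE) 0, max (r0 - r1 - NE) 0),
        (max (r0 - r2 - NE) 0, max (r2 - NE) 0)} : Set (ℝ × ℝ)) := by
  have hr1 : 0 ≤ r1 := by linarith
  have hr2 : 0 ≤ r2 := by linarith
  apply Set.Subset.antisymm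
  · apply convexHull_min _ (convex_convexHull ℝ _)
    obtain ⟨A, hAdef⟩ : ∃ x : ℝ, x = max (r1 - NE) 0 := ⟨_, rfl⟩
    obtain ⟨B, hBdef⟩ : ∃ x : ℝ, x = max (r2 - NE) 0 := ⟨_, rfl⟩
    obtain ⟨C, hCdef⟩ : ∃ x : ℝ, x = max (r0 - r1 - NE) 0 := ⟨_, rfl⟩
    obtain ⟨D, hDdef⟩ : ∃ x : ℝ, x = max (r0 - r2 - NE) 0 := ⟨_, rfl⟩
    rw [← hAdef, ← hBdef, ← hCdef, ← hDdef]
    have hA0 : 0 ≤ A := by rw [hAdef]; exact le_max_right _ _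
    have hB0 : 0 ≤ B := by rw [hBdef]; exact le_max_right _ _
    have hC0 : 0 ≤ C := by rw [hCdef]; exact le_max_right _ _
    have hD0 : 0 ≤ D := by rw [hDdef]; exact le_max_right _ _
    rintro d ⟨t1, t2, ht1, ht1r, ht2, ht2r, htsum, hd1, hd1a, hd2, hd2b⟩
    have hd1A : d.1 ≤ A := by rw [hAdef]; exact le_trans hd1a (max_le_max (by linarith) le_rfl)
    have hd2B : d.2 ≤ B := by rw [hBdef]; exact le_trans hd2b (max_le_max (by linarith) le_rfl)
    rcases eq_or_lt_of_le hd1 with hd1z | hd1pos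
    · -- d.1 = 0
      by_cases hB' : B = 0
      · refine mem5 (w0 := 1) (w1 := 0) (w2 := 0) (w3 := 0) (w4 := 0)
          (by norm_num) le_rfl le_rfl le_rfl le_rfl (by norm_num) ?_
        have e2 : d.2 = 0 := le_antisymm (by linarith [hd2B]) hd2
        rw [Prod.ext_iff]
        constructor <;> simp [← hd1z, e2]
      · have hBpos : 0 < B := lt_of_le_of_ne hB0 (Ne.symm hB')
        refine mem5 (w0 := 1 - d.2 / B) (w1 := 0) (w2 := d.2 / B) (w3 := 0) (w4 := 0)
          (by have := (div_le_one hBpos).mpr hd2B; linarith) le_rfl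
          (div_nonneg hd2 hB0) le_rfl le_rfl (by ring) ?_
        rw [Prod.ext_iff]
        constructor <;> simp [← hd1z]
        field_simp
    · rcases eq_or_lt_of_le hd2 with hd2z | hd2pos
      · -- d.2 = 0
        have hApos : 0 < A := lt_of_lt_of_le hd1pos hd1A
        refine mem5 (w0 := 1 - d.1 / A) (w1 := d.1 / A) (w2 := 0) (w3 := 0) (w4 := 0)
          (by have := (div_le_one hApos).mpr hd1A; linarith)
          (div_nonneg hd1 hA0) le_rfl le_rfl le_rfl (by ring) ?_
        rw [Prod.ext_iff]
        constructor <;> simp [← hd2z]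
        field_simp
      · -- d.1 > 0 and d.2 > 0
        have ht1NE : d.1 ≤ t1 - NE := by
          rcases le_max_iff.mp hd1a with h | h
          · exact h
          · linarith
        have ht2NE : d.2 ≤ t2 - NE := by
          rcases le_max_iff.mp hd2b with h | h
          · exact h
          · linarith
        have hAeq : A = r1 - NE := by rw [hAdef]; exact max_eq_left (by linarith)
        have hBeq : B = r2 - NE := by rw [hBdef]; exact max_eq_left (by linarith)
        have hApos : 0 < A := lt_of_lt_of_le hd1pos hd1A
        have hBpos : 0 < B := lt_of_lt_of_le hd2pos hd2B
        have hCB : C ≤ B := by rw [hCdef, hBeq]; exact max_le (by linarith) (by linarith)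
        have hDA : D ≤ A := by rw [hDdef, hAeq]; exact max_le (by linarith) (by linarith)
        have hC1 : r0 - r1 - NE ≤ C := by rw [hCdef]; exact le_max_left _ _
        have hD1 : r0 - r2 - NE ≤ D := by rw [hDdef]; exact le_max_left _ _
        have hsum2 : d.1 + d.2 ≤ r0 - 2 * NE := by linarith
        by_cases hc : d.2 ≤ C
        · have hCpos : 0 < C := lt_of_lt_of_le hd2pos hc
          have hα1 : d.1 / A ≤ 1 := (div_le_one hApos).mpr hd1A
          have hα0 : 0 ≤ d.1 / A := div_nonneg hd1 hA0
          have hβ1 : d.2 / C ≤ 1 := (div_le_one hCpos).mpr hc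
          have hβ0 : 0 ≤ d.2 / C := div_nonneg hd2 hC0
          have hγ1 : C / B ≤ 1 := (div_le_one hBpos).mpr hCB
          have hγ0 : 0 ≤ C / B := div_nonneg hC0 hB0
          have e1 : (0:ℝ) ≤ 1 - d.1/A := by linarith
          have e2 : (0:ℝ) ≤ 1 - d.2/C := by linarith
          have e3 : (0:ℝ) ≤ 1 - C/B := by linarith
          refine mem5 (w0 := (1 - d.1/A) * (1 - d.2/C) + (1 - d.1/A) * (d.2/C) * (1 - C/B))
            (w1 := (d.1/A) * (1 - d.2/C)) (w2 := (1 - d.1/A) * (d.2/C) * (C/B))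
            (w3 := (d.1/A) * (d.2/C)) (w4 := 0)
            (add_nonneg (mul_nonneg e1 e2) (mul_nonneg (mul_nonneg e1 hβ0) e3))
            (mul_nonneg hα0 e2) (mul_nonneg (mul_nonneg e1 hβ0) hγ0)
            (mul_nonneg hα0 hβ0) le_rfl
            (by field_simp; ring) ?_
          rw [Prod.ext_iff]
          constructor <;> simp <;> field_simp <;> ring
        · by_cases hdD : d.1 ≤ D
          · have hDpos : 0 < D := lt_of_lt_of_le hd1pos hdD
            have hα1 : d.2 / B ≤ 1 := (div_le_one hBpos).mpr hd2B
            have hα0 : 0 ≤ d.2 / B := div_nonneg hd2 hB0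
            have hβ1 : d.1 / D ≤ 1 := (div_le_one hDpos).mpr hdD
            have hβ0 : 0 ≤ d.1 / D := div_nonneg hd1 hD0
            have hγ1 : D / A ≤ 1 := (div_le_one hApos).mpr hDA
            have hγ0 : 0 ≤ D / A := div_nonneg hD0 hA0
            have e1 : (0:ℝ) ≤ 1 - d.2/B := by linarith
            have e2 : (0:ℝ) ≤ 1 - d.1/D := by linarith
            have e3 : (0:ℝ) ≤ 1 - D/A := by linarith
            refine mem5 (w0 := (1 - d.2/B) * (1 - d.1/D) + (1 - d.2/B) * (d.1/D) * (1 - D/A))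
              (w1 := (1 - d.2/B) * (d.1/D) * (D/A)) (w2 := (d.2/B) * (1 - d.1/D))
              (w3 := 0) (w4 := (d.2/B) * (d.1/D))
              (add_nonneg (mul_nonneg e1 e2) (mul_nonneg (mul_nonneg e1 hβ0) e3))
              (mul_nonneg (mul_nonneg e1 hβ0) hγ0) (mul_nonneg hα0 e2)
              le_rfl (mul_nonneg hα0 hβ0)
              (by field_simp [hApos.ne', hBpos.ne', hDpos.ne']; ring) ?_
            rw [Prod.ext_iff]
            refine ⟨?_, ?_⟩ <;>
              · simp only [Prod.smul_mk, Prod.mk_add_mk, smul_eq_mul]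
                field_simp [hApos.ne', hBpos.ne', hDpos.ne']
                ring
          · push_neg at hc hdD
            have hΔ : 0 < A * B - C * D := by nlinarith
            have key : d.1 * B - d.2 * D + (d.2 * A - d.1 * C) ≤ A * B - C * D := by
              rcases le_total (B - C) (A - D) with h | h
              · nlinarith [mul_nonneg (by linarith : (0:ℝ) ≤ d.1 - D)
                  (by linarith : (0:ℝ) ≤ A - D - (B - C)),
                  mul_nonneg (by linarith : (0:ℝ) ≤ D + B - d.1 - d.2)
                  (by linarith : (0:ℝ) ≤ A - D)]
              · nlinarith [mul_nonneg (by linarith : (0:ℝ) ≤ d.2 - C)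
                  (by linarith : (0:ℝ) ≤ B - C - (A - D)),
                  mul_nonneg (by linarith : (0:ℝ) ≤ A + C - d.1 - d.2)
                  (by linarith : (0:ℝ) ≤ B - C)]
            have hμ0 : 0 ≤ d.1 * B - d.2 * D := by nlinarith
            have hν0 : 0 ≤ d.2 * A - d.1 * C := by nlinarith
            refine mem5 (w0 := 1 - (d.1 * B - d.2 * D) / (A * B - C * D)
                - (d.2 * A - d.1 * C) / (A * B - C * D))
              (w1 := 0) (w2 := 0)
              (w3 := (d.1 * B - d.2 * D) / (A * B - C * D))
              (w4 := (d.2 * A - d.1 * C) / (A * B - C * D))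
              ?_ le_rfl le_rfl (div_nonneg hμ0 hΔ.le) (div_nonneg hν0 hΔ.le)
              (by ring) ?_
            · rw [sub_sub, ← add_div, sub_nonneg]
              exact (div_le_one hΔ).mpr key
            · rw [Prod.ext_iff]
              refine ⟨?_, ?_⟩ <;>
                · simp only [Prod.smul_mk, Prod.mk_add_mk, smul_eq_mul]
                  field_simp [hΔ.ne', show B * A - D * C ≠ 0 by linarith [mul_comm A B, mul_comm C D]]
                  ring
  · apply convexHull_mono
    intro p hp
    simp only [Set.mem_insert_iff, Set.mem_singleton_iff] at hp
    rcases hp with rfl | rfl | rfl | rfl | rfl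
    · exact ⟨0, 0, le_refl 0, hr1, le_refl 0, hr2, by linarith, le_refl 0,
        le_max_right _ _, le_refl 0, le_max_right _ _⟩
    · exact ⟨r1, 0, hr1, le_refl r1, le_refl 0, hr2, by linarith, le_max_right _ _,
        le_refl _, le_refl 0, le_max_right _ _⟩
    · exact ⟨0, r2, le_refl 0, hr1, hr2, le_refl r2, by linarith, le_refl 0,
        le_max_right _ _, le_max_right _ _, le_refl _⟩
    · exact ⟨r1, r0 - r1, hr1, le_refl r1, by linarith, by linarith, by linarith,
        le_max_right _ _, le_refl _, le_max_right _ _, le_refl _⟩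
    · exact ⟨r0 - r2, r2, by linarith, by linarith, hr2, le_refl r2, by linarith,
        le_max_right _ _, le_refl _, le_max_right _ _, le_refl _⟩
end

section
/- Extreme points of the case-(a) region: Assume additionally NE < r1, NE < r2, NE < r0 − r1, NE < r0 − r2, and r0 < r1 + r2. Let K = {(d1, d2) ∈ ℝ² : 0 ≤ d1 ≤ r1 − NE, 0 ≤ d2 ≤ r2 − NE, d1 + d2 ≤ r0 − 2·NE}. Then the set of extreme points of K is exactly {(0,0), (r1−NE, 0), (0, r2−NE), (r1−NE, r0−r1−NE), (r0−r2−NE, r2−NE)}. -/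
private lemma combo_max' {t s x y m : ℝ} (ht : 0 < t) (hs : 0 < s) (hts : t + s = 1)
    (hx : x ≤ m) (hy : y ≤ m) (h : t*x + s*y = m) : x = m ∧ y = m := by
  have h1 : t*(m - x) + s*(m - y) = 0 := by linear_combination m*hts - h
  have h2 : t*(m - x) = 0 := by
    have hb := mul_nonneg hs.le (sub_nonneg.2 hy)
    have ha := mul_nonneg ht.le (sub_nonneg.2 hx)
    linarith
  have h3 : s*(m - y) = 0 := by linarith
  constructor
  · have := (mul_eq_zero.mp h2).resolve_left ht.ne'
    linarith
  · have := (mul_eq_zero.mp h3).resolve_left hs.ne'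
    linarith

private lemma combo_min' {t s x y m : ℝ} (ht : 0 < t) (hs : 0 < s) (hts : t + s = 1)
    (hx : m ≤ x) (hy : m ≤ y) (h : t*x + s*y = m) : x = m ∧ y = m := by
  have := combo_max' (x := -x) (y := -y) (m := -m) ht hs hts (by linarith) (by linarith)
    (by linarith [h])
  constructor <;> linarith [this.1, this.2]

/-- Extreme points of the case-(a) region: under the strict hypotheses
`NE < r1`, `NE < r2`, `NE < r0 - r1`, `NE < r0 - r2`, `r0 < r1 + r2`, the set of
extreme points of `K = {(d1,d2) : 0 ≤ d1 ≤ r1 - NE, 0 ≤ d2 ≤ r2 - NE,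
d1 + d2 ≤ r0 - 2 NE}` is exactly the five corner points of Theorem 1. -/
theorem sdof_region_case_a_extremePoints (r0 r1 r2 NE : ℝ)
    (hNE : 0 ≤ NE) (h1 : r1 ≤ r0) (h2 : r2 ≤ r0) (h0 : r0 ≤ r1 + r2)
    (hs1 : NE < r1) (hs2 : NE < r2) (hs3 : NE < r0 - r1) (hs4 : NE < r0 - r2)
    (hs5 : r0 < r1 + r2) :
    Set.extremePoints ℝ
      {d : ℝ × ℝ | 0 ≤ d.1 ∧ d.1 ≤ r1 - NE ∧ 0 ≤ d.2 ∧ d.2 ≤ r2 - NE ∧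
        d.1 + d.2 ≤ r0 - 2 * NE} =
    ({((0 : ℝ), (0 : ℝ)),
      (r1 - NE, 0),
      (0, r2 - NE),
      (r1 - NE, r0 - r1 - NE),
      (r0 - r2 - NE, r2 - NE)} : Set (ℝ × ℝ)) := by
  have hca : r1 - NE < r0 - 2*NE := by linarith
  have hcb : r2 - NE < r0 - 2*NE := by linarith
  have hab : r0 - 2*NE < (r1 - NE) + (r2 - NE) := by linarith
  ext p
  simp only [Set.mem_insert_iff, Set.mem_singleton_iff]
  constructor
  · rintro ⟨⟨hp1, hp2, hp3, hp4, hp5⟩, hext⟩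
    -- direction (1,0) is blocked
    have C1 : p.1 = 0 ∨ p.1 = r1 - NE ∨ p.1 + p.2 = r0 - 2*NE := by
      by_contra hc
      push_neg at hc
      obtain ⟨hne0, hnea, hnec⟩ := hc
      have h01 : 0 < p.1 := lt_of_le_of_ne hp1 (Ne.symm hne0)
      have h02 : p.1 < r1 - NE := lt_of_le_of_ne hp2 hnea
      have h03 : p.1 + p.2 < r0 - 2*NE := lt_of_le_of_ne hp5 hnec
      set ε := min (min p.1 (r1 - NE - p.1)) (r0 - 2*NE - p.1 - p.2) with hε
      have hε0 : 0 < ε := lt_min (lt_min h01 (by linarith)) (by linarith)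
      have hεa : ε ≤ p.1 := le_trans (min_le_left _ _) (min_le_left _ _)
      have hεb : ε ≤ r1 - NE - p.1 := le_trans (min_le_left _ _) (min_le_right _ _)
      have hεc : ε ≤ r0 - 2*NE - p.1 - p.2 := min_le_right _ _
      have hx : ((p.1 + ε, p.2) : ℝ × ℝ) ∈ {d : ℝ × ℝ | 0 ≤ d.1 ∧ d.1 ≤ r1 - NE ∧
          0 ≤ d.2 ∧ d.2 ≤ r2 - NE ∧ d.1 + d.2 ≤ r0 - 2 * NE} := by
        simp only [Set.mem_setOf_eq]
        refine ⟨?_, ?_, ?_, ?_, ?_⟩ <;> linarith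
      have hy : ((p.1 - ε, p.2) : ℝ × ℝ) ∈ {d : ℝ × ℝ | 0 ≤ d.1 ∧ d.1 ≤ r1 - NE ∧
          0 ≤ d.2 ∧ d.2 ≤ r2 - NE ∧ d.1 + d.2 ≤ r0 - 2 * NE} := by
        simp only [Set.mem_setOf_eq]
        refine ⟨?_, ?_, ?_, ?_, ?_⟩ <;> linarith
      have hseg : p ∈ openSegment ℝ ((p.1 + ε, p.2) : ℝ × ℝ) (p.1 - ε, p.2) := by
        refine ⟨1/2, 1/2, by norm_num, by norm_num, by norm_num, ?_⟩
        simp [Prod.ext_iff]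
        constructor <;> ring
      have heq := (hext hx hy hseg)
      have : p.1 + ε = p.1 := congrArg Prod.fst heq
      linarith
    -- direction (0,1) is blocked
    have C2 : p.2 = 0 ∨ p.2 = r2 - NE ∨ p.1 + p.2 = r0 - 2*NE := by
      by_contra hc
      push_neg at hc
      obtain ⟨hne0, hnea, hnec⟩ := hc
      have h01 : 0 < p.2 := lt_of_le_of_ne hp3 (Ne.symm hne0)
      have h02 : p.2 < r2 - NE := lt_of_le_of_ne hp4 hnea
      have h03 : p.1 + p.2 < r0 - 2*NE := lt_of_le_of_ne hp5 hnec
      set ε := min (min p.2 (r2 - NE - p.2)) (r0 - 2*NE - p.1 - p.2) with hε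
      have hε0 : 0 < ε := lt_min (lt_min h01 (by linarith)) (by linarith)
      have hεa : ε ≤ p.2 := le_trans (min_le_left _ _) (min_le_left _ _)
      have hεb : ε ≤ r2 - NE - p.2 := le_trans (min_le_left _ _) (min_le_right _ _)
      have hεc : ε ≤ r0 - 2*NE - p.1 - p.2 := min_le_right _ _
      have hx : ((p.1, p.2 + ε) : ℝ × ℝ) ∈ {d : ℝ × ℝ | 0 ≤ d.1 ∧ d.1 ≤ r1 - NE ∧
          0 ≤ d.2 ∧ d.2 ≤ r2 - NE ∧ d.1 + d.2 ≤ r0 - 2 * NE} := by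
        simp only [Set.mem_setOf_eq]
        refine ⟨?_, ?_, ?_, ?_, ?_⟩ <;> linarith
      have hy : ((p.1, p.2 - ε) : ℝ × ℝ) ∈ {d : ℝ × ℝ | 0 ≤ d.1 ∧ d.1 ≤ r1 - NE ∧
          0 ≤ d.2 ∧ d.2 ≤ r2 - NE ∧ d.1 + d.2 ≤ r0 - 2 * NE} := by
        simp only [Set.mem_setOf_eq]
        refine ⟨?_, ?_, ?_, ?_, ?_⟩ <;> linarith
      have hseg : p ∈ openSegment ℝ ((p.1, p.2 + ε) : ℝ × ℝ) (p.1, p.2 - ε) := by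
        refine ⟨1/2, 1/2, by norm_num, by norm_num, by norm_num, ?_⟩
        simp [Prod.ext_iff]
        constructor <;> ring
      have heq := (hext hx hy hseg)
      have : p.2 + ε = p.2 := congrArg Prod.snd heq
      linarith
    -- direction (1,-1) is blocked
    have C3 : p.1 = 0 ∨ p.1 = r1 - NE ∨ p.2 = 0 ∨ p.2 = r2 - NE := by
      by_contra hc
      push_neg at hc
      obtain ⟨hne0, hnea, hne0', hneb⟩ := hc
      have h01 : 0 < p.1 := lt_of_le_of_ne hp1 (Ne.symm hne0)
      have h02 : p.1 < r1 - NE := lt_of_le_of_ne hp2 hnea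
      have h03 : 0 < p.2 := lt_of_le_of_ne hp3 (Ne.symm hne0')
      have h04 : p.2 < r2 - NE := lt_of_le_of_ne hp4 hneb
      set ε := min (min p.1 (r1 - NE - p.1)) (min p.2 (r2 - NE - p.2)) with hε
      have hε0 : 0 < ε := lt_min (lt_min h01 (by linarith)) (lt_min h03 (by linarith))
      have hεa : ε ≤ p.1 := le_trans (min_le_left _ _) (min_le_left _ _)
      have hεb : ε ≤ r1 - NE - p.1 := le_trans (min_le_left _ _) (min_le_right _ _)
      have hεc : ε ≤ p.2 := le_trans (min_le_right _ _) (min_le_left _ _)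
      have hεd : ε ≤ r2 - NE - p.2 := le_trans (min_le_right _ _) (min_le_right _ _)
      have hx : ((p.1 + ε, p.2 - ε) : ℝ × ℝ) ∈ {d : ℝ × ℝ | 0 ≤ d.1 ∧ d.1 ≤ r1 - NE ∧
          0 ≤ d.2 ∧ d.2 ≤ r2 - NE ∧ d.1 + d.2 ≤ r0 - 2 * NE} := by
        simp only [Set.mem_setOf_eq]
        refine ⟨?_, ?_, ?_, ?_, ?_⟩ <;> linarith
      have hy : ((p.1 - ε, p.2 + ε) : ℝ × ℝ) ∈ {d : ℝ × ℝ | 0 ≤ d.1 ∧ d.1 ≤ r1 - NE ∧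
          0 ≤ d.2 ∧ d.2 ≤ r2 - NE ∧ d.1 + d.2 ≤ r0 - 2 * NE} := by
        simp only [Set.mem_setOf_eq]
        refine ⟨?_, ?_, ?_, ?_, ?_⟩ <;> linarith
      have hseg : p ∈ openSegment ℝ ((p.1 + ε, p.2 - ε) : ℝ × ℝ) (p.1 - ε, p.2 + ε) := by
        refine ⟨1/2, 1/2, by norm_num, by norm_num, by norm_num, ?_⟩
        simp [Prod.ext_iff]
        constructor <;> ring
      have heq := (hext hx hy hseg)
      have : p.1 + ε = p.1 := congrArg Prod.fst heq
      linarith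
    -- case analysis
    simp only [Prod.ext_iff]
    rcases C3 with h | h | h | h
    · rcases C2 with g | g | g
      · exact Or.inl ⟨h, g⟩
      · exact Or.inr (Or.inr (Or.inl ⟨h, g⟩))
      · exfalso; rw [h] at g; linarith
    · rcases C2 with g | g | g
      · exact Or.inr (Or.inl ⟨h, g⟩)
      · exfalso; linarith
      · exact Or.inr (Or.inr (Or.inr (Or.inl ⟨h, by linarith⟩)))
    · rcases C1 with g | g | g
      · exact Or.inl ⟨g, h⟩
      · exact Or.inr (Or.inl ⟨g, h⟩)
      · exfalso; rw [h] at g; linarith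
    · rcases C1 with g | g | g
      · exact Or.inr (Or.inr (Or.inl ⟨g, h⟩))
      · exfalso; linarith
      · exact Or.inr (Or.inr (Or.inr (Or.inr ⟨by linarith, h⟩)))
  · rintro (rfl | rfl | rfl | rfl | rfl)
    · refine ⟨by simp only [Set.mem_setOf_eq]; refine ⟨?_, ?_, ?_, ?_, ?_⟩ <;> linarith, ?_⟩
      rintro x ⟨hx1, hx2, hx3, hx4, hx5⟩ y ⟨hy1, hy2, hy3, hy4, hy5⟩ ⟨t, s, ht, hs, hts, heq⟩
      have e1 : t * x.1 + s * y.1 = 0 := congrArg Prod.fst heq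
      have e2 : t * x.2 + s * y.2 = 0 := congrArg Prod.snd heq
      have c1 := combo_min' ht hs hts hx1 hy1 e1
      have c2 := combo_min' ht hs hts hx3 hy3 e2
      exact Prod.ext c1.1 c2.1
    · refine ⟨by simp only [Set.mem_setOf_eq]; refine ⟨?_, ?_, ?_, ?_, ?_⟩ <;> linarith, ?_⟩
      rintro x ⟨hx1, hx2, hx3, hx4, hx5⟩ y ⟨hy1, hy2, hy3, hy4, hy5⟩ ⟨t, s, ht, hs, hts, heq⟩
      have e1 : t * x.1 + s * y.1 = r1 - NE := congrArg Prod.fst heq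
      have e2 : t * x.2 + s * y.2 = 0 := congrArg Prod.snd heq
      have c1 := combo_max' ht hs hts hx2 hy2 e1
      have c2 := combo_min' ht hs hts hx3 hy3 e2
      exact Prod.ext c1.1 c2.1
    · refine ⟨by simp only [Set.mem_setOf_eq]; refine ⟨?_, ?_, ?_, ?_, ?_⟩ <;> linarith, ?_⟩
      rintro x ⟨hx1, hx2, hx3, hx4, hx5⟩ y ⟨hy1, hy2, hy3, hy4, hy5⟩ ⟨t, s, ht, hs, hts, heq⟩
      have e1 : t * x.1 + s * y.1 = 0 := congrArg Prod.fst heq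
      have e2 : t * x.2 + s * y.2 = r2 - NE := congrArg Prod.snd heq
      have c1 := combo_min' ht hs hts hx1 hy1 e1
      have c2 := combo_max' ht hs hts hx4 hy4 e2
      exact Prod.ext c1.1 c2.1
    · refine ⟨by simp only [Set.mem_setOf_eq]; refine ⟨?_, ?_, ?_, ?_, ?_⟩ <;> linarith, ?_⟩
      rintro x ⟨hx1, hx2, hx3, hx4, hx5⟩ y ⟨hy1, hy2, hy3, hy4, hy5⟩ ⟨t, s, ht, hs, hts, heq⟩
      have e1 : t * x.1 + s * y.1 = r1 - NE := congrArg Prod.fst heq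
      have e2 : t * x.2 + s * y.2 = r0 - r1 - NE := congrArg Prod.snd heq
      have c1 := combo_max' ht hs hts hx2 hy2 e1
      have hx2' : x.2 ≤ r0 - r1 - NE := by rw [c1.1] at hx5; linarith
      have hy2' : y.2 ≤ r0 - r1 - NE := by rw [c1.2] at hy5; linarith
      have c2 := combo_max' ht hs hts hx2' hy2' e2
      exact Prod.ext c1.1 c2.1
    · refine ⟨by simp only [Set.mem_setOf_eq]; refine ⟨?_, ?_, ?_, ?_, ?_⟩ <;> linarith, ?_⟩
      rintro x ⟨hx1, hx2, hx3, hx4, hx5⟩ y ⟨hy1, hy2, hy3, hy4, hy5⟩ ⟨t, s, ht, hs, hts, heq⟩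
      have e1 : t * x.1 + s * y.1 = r0 - r2 - NE := congrArg Prod.fst heq
      have e2 : t * x.2 + s * y.2 = r2 - NE := congrArg Prod.snd heq
      have c2 := combo_max' ht hs hts hx4 hy4 e2
      have hx1' : x.1 ≤ r0 - r2 - NE := by rw [c2.1] at hx5; linarith
      have hy1' : y.1 ≤ r0 - r2 - NE := by rw [c2.2] at hy5; linarith
      have c1 := combo_max' ht hs hts hx1' hy1' e1
      exact Prod.ext c1.1 c2.1
end

section
/- Covering multiplicity of the recursive construction: every element k ∈ G = {1, …, g} belongs to exactly f of the sets F_1, F_2, …, F_g; that is, the cardinality of {i : 1 ≤ i ≤ g and k ∈ F_i} equals f. -/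
/-- The set of the `f` smallest elements of a finite set `S` of naturals. -/
def takeMin (S : Finset ℕ) (f : ℕ) : Finset ℕ :=
  ((S.sort (· ≤ ·)).take f).toFinset

/-- The pair `(V_i, c_i)` of Definition 1 of the paper: `V_0 = {1, …, g}`, `c_0 = 1`;
in Case I (`|V_{i-1}| ≥ f`), `F_i` is the set of the `f` smallest elements of
`V_{i-1}`, `V_i = V_{i-1} \ F_i` and `c_i = c_{i-1}`; in Case II (`|V_{i-1}| < f`),
`H_i = {1, …, f - |V_{i-1}|}`, `V_i = {1, …, g} \ H_i` and `c_i = c_{i-1} + 1`. -/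
def paperVc (g f : ℕ) : ℕ → Finset ℕ × ℕ
  | 0 => (Finset.Icc 1 g, 1)
  | (i + 1) =>
    let V := (paperVc g f i).1
    let c := (paperVc g f i).2
    if f ≤ V.card then
      (V \ takeMin V f, c)
    else
      (Finset.Icc 1 g \ Finset.Icc 1 (f - V.card), c + 1)

/-- The set `F_i` of Definition 1 of the paper (`i ≥ 1`): the `f` smallest elements of
`V_{i-1}` in Case I, and `V_{i-1} ∪ H_i` in Case II. -/
def paperF (g f : ℕ) (i : ℕ) : Finset ℕ :=
  let V := (paperVc g f (i - 1)).1
  if f ≤ V.card then takeMin V f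
  else V ∪ Finset.Icc 1 (f - V.card)

/-- `H_i` of Case II of Definition 1. -/
def paperH (g f : ℕ) (i : ℕ) : Finset ℕ :=
  Finset.Icc 1 (f - (paperVc g f (i - 1)).1.card)

namespace PaperAux

/-- The left endpoint tracker: `V_i = Icc (s i + 1) g`. -/
def s (g f : ℕ) : ℕ → ℕ
  | 0 => 0
  | (j + 1) => if s g f j + f ≤ g then s g f j + f else s g f j + f - g

lemma s_le (g f : ℕ) (hfg : f ≤ g) : ∀ j, s g f j ≤ g
  | 0 => by simp [s]
  | (j + 1) => by
      have := s_le g f hfg j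
      unfold s; split <;> omega

lemma s_spec (g f : ℕ) : ∀ j, ∃ w, j * f = s g f j + g * w
  | 0 => ⟨0, by simp [s]⟩
  | (j + 1) => by
      obtain ⟨w, hw⟩ := s_spec g f j
      have h1 : (j + 1) * f = j * f + f := by ring
      unfold s; split
      · exact ⟨w, by omega⟩
      · refine ⟨w + 1, ?_⟩
        have h2 : g * (w + 1) = g * w + g := by ring
        omega

lemma sort_Icc (a b : ℕ) : (Finset.Icc a b).sort (· ≤ ·) = List.range' a (b + 1 - a) := by
  have hn : (List.range' a (b + 1 - a)).Nodup := List.nodup_range'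
  have ht : (List.range' a (b + 1 - a)).toFinset = Finset.Icc a b := by
    ext x
    simp only [List.mem_toFinset, List.mem_range'_1, Finset.mem_Icc]
    omega
  rw [← ht, List.toFinset_sort _ hn]
  rw [List.range'_eq_map_range]
  exact (List.pairwise_map).mpr ((List.pairwise_le_range (n := _)).imp (by omega))

lemma takeMin_Icc (a b f : ℕ) (hf : 1 ≤ f) (h : f ≤ b + 1 - a) :
    takeMin (Finset.Icc a b) f = Finset.Icc a (a + f - 1) := by
  unfold takeMin
  rw [sort_Icc, List.range'_eq_map_range, ← List.map_take, List.take_range,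
    min_eq_left h]
  ext x
  simp only [List.mem_toFinset, List.mem_map, List.mem_range, Finset.mem_Icc]
  constructor
  · rintro ⟨i, hi, rfl⟩; omega
  · rintro ⟨h1, h2⟩; exact ⟨x - a, by omega, by omega⟩

lemma V_eq (g f : ℕ) (hf : 1 ≤ f) (hfg : f ≤ g) :
    ∀ i, (paperVc g f i).1 = Finset.Icc (s g f i + 1) g
  | 0 => by simp [paperVc, s]
  | (i + 1) => by
      have ih := V_eq g f hf hfg i
      have hs := s_le g f hfg i
      have h1 : paperVc g f (i + 1) =
          if f ≤ (paperVc g f i).1.card then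
            ((paperVc g f i).1 \ takeMin (paperVc g f i).1 f, (paperVc g f i).2)
          else
            (Finset.Icc 1 g \ Finset.Icc 1 (f - (paperVc g f i).1.card),
              (paperVc g f i).2 + 1) := rfl
      have hcard : (paperVc g f i).1.card = g - s g f i := by
        rw [ih, Nat.card_Icc]; omega
      rw [h1, hcard]
      by_cases hc : f ≤ g - s g f i
      · rw [if_pos hc]
        have hsi : s g f (i + 1) = s g f i + f := by
          have e : s g f (i + 1)
              = if s g f i + f ≤ g then s g f i + f else s g f i + f - g := rfl
          rw [e, if_pos (by omega)]
        show (paperVc g f i).1 \ takeMin (paperVc g f i).1 f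
            = Finset.Icc (s g f (i + 1) + 1) g
        rw [ih, takeMin_Icc (s g f i + 1) g f hf (by omega), hsi]
        ext x
        simp only [Finset.mem_sdiff, Finset.mem_Icc]
        omega
      · rw [if_neg hc]
        have hsi : s g f (i + 1) = s g f i + f - g := by
          have e : s g f (i + 1)
              = if s g f i + f ≤ g then s g f i + f else s g f i + f - g := rfl
          rw [e, if_neg (by omega)]
        show Finset.Icc 1 g \ Finset.Icc 1 (f - (g - s g f i))
            = Finset.Icc (s g f (i + 1) + 1) g
        rw [hsi]
        ext x
        simp only [Finset.mem_sdiff, Finset.mem_Icc]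
        omega

lemma mem_F_iff (g f : ℕ) (hf : 1 ≤ f) (hfg : f ≤ g) (j k : ℕ)
    (hk1 : 1 ≤ k) (hk2 : k ≤ g) :
    k ∈ paperF g f (j + 1) ↔ (k - 1 + g - s g f j) % g < f := by
  have hV := V_eq g f hf hfg j
  have hs := s_le g f hfg j
  unfold paperF
  simp only [Nat.add_sub_cancel, hV]
  have hcard : (Finset.Icc (s g f j + 1) g).card = g - s g f j := by
    rw [Nat.card_Icc]; omega
  rw [hcard]
  set t := s g f j with ht
  by_cases hc : f ≤ g - t
  · rw [if_pos hc, takeMin_Icc _ _ _ hf (by omega), Finset.mem_Icc]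
    by_cases hkt : t + 1 ≤ k
    · have he : (k - 1 + g - t) % g = k - 1 - t := by
        have e : k - 1 + g - t = (k - 1 - t) + g := by omega
        rw [e, Nat.add_mod_right, Nat.mod_eq_of_lt (by omega)]
      rw [he]; omega
    · have he : (k - 1 + g - t) % g = k - 1 + g - t := Nat.mod_eq_of_lt (by omega)
      rw [he]; omega
  · rw [if_neg hc]
    simp only [Finset.mem_union, Finset.mem_Icc]
    by_cases hkt : t + 1 ≤ k
    · have he : (k - 1 + g - t) % g = k - 1 - t := by
        have e : k - 1 + g - t = (k - 1 - t) + g := by omega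
        rw [e, Nat.add_mod_right, Nat.mod_eq_of_lt (by omega)]
      rw [he]; omega
    · have he : (k - 1 + g - t) % g = k - 1 + g - t := Nat.mod_eq_of_lt (by omega)
      rw [he]; omega

/-- The canonical position `j*f + d` has residue `k - 1` mod `g`. -/
lemma pos_mod (g f : ℕ) (hfg : f ≤ g) (j k : ℕ) (hk1 : 1 ≤ k) (hk2 : k ≤ g) :
    (j * f + (k - 1 + g - s g f j) % g) % g = k - 1 := by
  obtain ⟨w, hw⟩ := s_spec g f j
  rw [hw]
  have e1 : s g f j + g * w + (k - 1 + g - s g f j) % g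
      = (s g f j + (k - 1 + g - s g f j) % g) + g * w := by ring
  rw [e1, Nat.add_mul_mod_self_left, Nat.add_mod_mod]
  have e2 : s g f j + (k - 1 + g - s g f j) = k - 1 + g := by
    have := s_le g f hfg j
    omega
  rw [e2, Nat.add_mod_right, Nat.mod_eq_of_lt (by omega)]

/-- Any position in the `j`-th window with residue `k-1` determines `d`. -/
lemma d_eq (g f : ℕ) (hfg : f ≤ g) (j k m : ℕ) (hk1 : 1 ≤ k) (hk2 : k ≤ g)
    (hjm : j * f ≤ m) (hm : m % g = k - 1) :
    (k - 1 + g - s g f j) % g = (m - j * f) % g := by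
  obtain ⟨w, hw⟩ := s_spec g f j
  have hsg := s_le g f hfg j
  rw [← hm]
  have e1 : m % g + g - s g f j = m % g + (g - s g f j) := by omega
  rw [e1, Nat.mod_add_mod]
  have e2 : m + (g - s g f j) = (m - j * f) + g * (w + 1) := by
    have h2 : g * (w + 1) = g * w + g := by ring
    omega
  rw [e2, Nat.add_mul_mod_self_left]

end PaperAux

open PaperAux in
/-- Covering multiplicity: every `k ∈ G = {1, …, g}` belongs to exactly `f` of the
sets `F_1, …, F_g`. -/
theorem paperF_covering_multiplicity (g f : ℕ) (hf : 1 ≤ f) (hfg : f ≤ g)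
    (k : ℕ) (hk : k ∈ Finset.Icc 1 g) :
    ((Finset.Icc 1 g).filter (fun i => k ∈ paperF g f i)).card = f := by
  rw [Finset.mem_Icc] at hk
  obtain ⟨hk1, hk2⟩ := hk
  have hg : 0 < g := by omega
  conv_rhs => rw [← Finset.card_range f]
  apply Finset.card_nbij'
    (i := fun i => ((i - 1) * f + (k - 1 + g - s g f (i - 1)) % g) / g)
    (j := fun q => (q * g + (k - 1)) / f + 1)
  · -- forward map lands in range f
    intro a ha
    rw [Finset.mem_coe, Finset.mem_filter, Finset.mem_Icc] at ha
    obtain ⟨⟨ha1, ha2⟩, haF⟩ := ha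
    obtain ⟨j, rfl⟩ : ∃ j, a = j + 1 := ⟨a - 1, by omega⟩
    simp only [Nat.add_sub_cancel] at *
    rw [mem_F_iff g f hf hfg j k hk1 hk2] at haF
    rw [Finset.mem_coe, Finset.mem_range, Nat.div_lt_iff_lt_mul hg]
    have : (j + 1) * f ≤ g * f := Nat.mul_le_mul_right f (by omega)
    have h1 : (j + 1) * f = j * f + f := by ring
    have h2 : f * g = g * f := by ring
    omega
  · -- backward map lands in the filter set
    intro q hq
    rw [Finset.mem_coe, Finset.mem_range] at hq
    show (q * g + (k - 1)) / f + 1 ∈ (Finset.Icc 1 g).filter (fun i => k ∈ paperF g f i)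
    set m := q * g + (k - 1) with hm
    have hmod : m % g = k - 1 := by
      rw [hm, Nat.mul_comm q g, Nat.mul_add_mod, Nat.mod_eq_of_lt (by omega)]
    have hmlt : m < f * g := by
      have : (q + 1) * g ≤ f * g := Nat.mul_le_mul_right g (by omega)
      have h1 : (q + 1) * g = q * g + g := by ring
      omega
    set j := m / f with hj
    have hjf : j * f ≤ m ∧ m < j * f + f := by
      have h1 := Nat.div_add_mod m f
      have h2 : m % f < f := Nat.mod_lt _ (by omega)
      have h3 : j * f = f * (m / f) := by rw [hj, Nat.mul_comm]
      omega
    have hjg : j < g := by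
      rw [hj, Nat.div_lt_iff_lt_mul (by omega)]
      have : f * g = g * f := by ring
      omega
    rw [Finset.mem_filter, Finset.mem_Icc]
    refine ⟨⟨Nat.le_add_left 1 j, Nat.succ_le_of_lt hjg⟩, ?_⟩
    show k ∈ paperF g f (j + 1)
    rw [mem_F_iff g f hf hfg j k hk1 hk2,
      d_eq g f hfg j k m hk1 hk2 hjf.1 hmod]
    rw [Nat.mod_eq_of_lt (by omega)]
    omega
  · -- left inverse
    intro a ha
    rw [Finset.mem_coe, Finset.mem_filter, Finset.mem_Icc] at ha
    obtain ⟨⟨ha1, ha2⟩, haF⟩ := ha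
    obtain ⟨j, rfl⟩ : ∃ j, a = j + 1 := ⟨a - 1, by omega⟩
    simp only [Nat.add_sub_cancel] at *
    rw [mem_F_iff g f hf hfg j k hk1 hk2] at haF
    set d := (k - 1 + g - s g f j) % g with hd
    set m := j * f + d with hm
    have hmod : m % g = k - 1 := pos_mod g f hfg j k hk1 hk2
    have h1 : g * (m / g) + m % g = m := Nat.div_add_mod m g
    have h2 : m / g * g + (k - 1) = m := by
      have h2' : m / g * g = g * (m / g) := Nat.mul_comm _ _
      omega
    rw [h2]
    have h3 : m / f = j := by
      rw [hm, Nat.mul_comm j f, Nat.mul_add_div (by omega : 0 < f),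
        Nat.div_eq_of_lt haF, Nat.add_zero]
    rw [h3]
  · -- right inverse
    intro q hq
    rw [Finset.mem_coe, Finset.mem_range] at hq
    set m := q * g + (k - 1) with hm
    have hmod : m % g = k - 1 := by
      rw [hm, Nat.mul_comm q g, Nat.mul_add_mod, Nat.mod_eq_of_lt (by omega)]
    set j := m / f with hj
    have hjf : j * f ≤ m ∧ m < j * f + f := by
      have h1 := Nat.div_add_mod m f
      have h2 : m % f < f := Nat.mod_lt _ (by omega)
      have h3 : j * f = f * (m / f) := by rw [hj, Nat.mul_comm]
      omega
    simp only [Nat.add_sub_cancel]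
    have hde : (k - 1 + g - s g f j) % g = m - j * f := by
      rw [d_eq g f hfg j k m hk1 hk2 hjf.1 hmod,
        Nat.mod_eq_of_lt (by omega)]
    rw [hde]
    have h4 : j * f + (m - j * f) = m := by omega
    rw [h4, hm]
    rw [Nat.mul_comm q g, Nat.mul_add_div hg, Nat.div_eq_of_lt (by omega), Nat.add_zero]
end

section
/- Weighted-sum identity for the recursive construction: for every function x : {1, …, g} → ℝ, the double sum over i from 1 to g of (the sum of x(k) over k ∈ F_i) equals f times the sum of x(k) over k ∈ G = {1, …, g}; that is, ∑_{i=1}^{g} ∑_{k ∈ F_i} x(k) = f · ∑_{k=1}^{g} x(k). -/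
/- Auxiliary lemmas -/

lemma range'_toFinset (a n : ℕ) (ha : 1 ≤ a) :
    (List.range' a n).toFinset = Finset.Icc a (a + n - 1) := by
  ext k
  simp only [List.mem_toFinset, List.mem_range'_1, Finset.mem_Icc]
  omega

lemma sort_Icc (a b : ℕ) (ha : 1 ≤ a) :
    (Finset.Icc a b).sort (· ≤ ·) = List.range' a (b + 1 - a) := by
  refine (fun hp h1 h2 => List.Perm.eq_of_pairwise' (r := (· ≤ ·)) h1 h2 hp) ?_ ?_ ?_
  · apply List.perm_of_nodup_nodup_toFinset_eq (Finset.sort_nodup _ _)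
      (List.nodup_range')
    rw [Finset.sort_toFinset, range'_toFinset _ _ ha]
    ext k
    simp only [Finset.mem_Icc]
    omega
  · exact Finset.pairwise_sort _ _
  · exact (List.pairwise_lt_range' (s := a) (n := b + 1 - a)).imp le_of_lt

lemma take_range' : ∀ (n f a : ℕ), (List.range' a n).take f = List.range' a (min f n)
  | 0, f, a => by simp
  | (n+1), 0, a => by simp
  | (n+1), (f+1), a => by
    rw [List.range'_succ, List.take_succ_cons, take_range' n f (a+1)]
    rcases Nat.le_total f n with h | h
    · rw [min_eq_left h, min_eq_left (by omega), List.range'_succ]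
    · rw [min_eq_right h, min_eq_right (by omega), List.range'_succ]

lemma takeMin_Icc (a b f : ℕ) (ha : 1 ≤ a) (h : f ≤ b + 1 - a) :
    takeMin (Finset.Icc a b) f = Finset.Icc a (a + f - 1) := by
  rw [takeMin, sort_Icc _ _ ha, take_range', min_eq_left h, range'_toFinset _ _ ha]

lemma takeMin_subset (S : Finset ℕ) (f : ℕ) : takeMin S f ⊆ S := by
  intro k hk
  rw [takeMin, List.mem_toFinset] at hk
  exact (Finset.mem_sort (α := ℕ) (· ≤ ·)).1 (List.take_subset _ _ hk)

/-- Structure lemma: `V_i = Icc (g+1-n) g` with `c_i * g = i * f + n`, `n ≤ g`. -/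
lemma paperVc_structure (g f : ℕ) (hf : 1 ≤ f) (hfg : f ≤ g) : ∀ i : ℕ, ∃ n : ℕ,
    n ≤ g ∧ (paperVc g f i).1 = Finset.Icc (g + 1 - n) g ∧
      (paperVc g f i).2 * g = i * f + n := by
  intro i
  induction i with
  | zero => exact ⟨g, le_rfl, by simp [paperVc], by simp [paperVc]⟩
  | succ i ih =>
    obtain ⟨n, hng, hV, hc⟩ := ih
    have hcard : (paperVc g f i).1.card = n := by
      rw [hV, Nat.card_Icc]; omega
    have hVc : paperVc g f (i + 1) =
        (if f ≤ (paperVc g f i).1.card then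
          ((paperVc g f i).1 \ takeMin (paperVc g f i).1 f, (paperVc g f i).2)
        else
          (Finset.Icc 1 g \ Finset.Icc 1 (f - (paperVc g f i).1.card),
            (paperVc g f i).2 + 1)) := rfl
    by_cases hcase : f ≤ n
    · refine ⟨n - f, by omega, ?_, ?_⟩
      · rw [hVc, if_pos (by omega)]
        dsimp only
        rw [hV, takeMin_Icc _ _ _ (by omega) (by omega)]
        ext k
        simp only [Finset.mem_sdiff, Finset.mem_Icc]
        omega
      · rw [hVc, if_pos (by omega)]
        dsimp only
        rw [Nat.succ_mul, hc]
        omega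
    · refine ⟨g - (f - n), by omega, ?_, ?_⟩
      · rw [hVc, if_neg (by omega)]
        dsimp only
        rw [hcard]
        ext k
        simp only [Finset.mem_sdiff, Finset.mem_Icc]
        omega
      · rw [hVc, if_neg (by omega)]
        dsimp only
        rw [Nat.succ_mul, add_mul, one_mul, hc]
        omega

/-- Step lemma: the sum over `F_{i+1}` telescopes. -/
lemma paperF_step (g f : ℕ) (hf : 1 ≤ f) (hfg : f ≤ g) (x : ℕ → ℝ) (i : ℕ) :
    ∑ k ∈ paperF g f (i + 1), x k =
      (∑ k ∈ (paperVc g f i).1, x k) - (∑ k ∈ (paperVc g f (i + 1)).1, x k) +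
        (((paperVc g f (i + 1)).2 : ℝ) - ((paperVc g f i).2 : ℝ)) *
          ∑ k ∈ Finset.Icc 1 g, x k := by
  obtain ⟨n, hng, hV, hc⟩ := paperVc_structure g f hf hfg i
  have hcard : (paperVc g f i).1.card = n := by rw [hV, Nat.card_Icc]; omega
  have hF : paperF g f (i + 1) =
      (if f ≤ (paperVc g f i).1.card then takeMin (paperVc g f i).1 f
        else (paperVc g f i).1 ∪ Finset.Icc 1 (f - (paperVc g f i).1.card)) := rfl
  have hVc : paperVc g f (i + 1) =
      (if f ≤ (paperVc g f i).1.card then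
        ((paperVc g f i).1 \ takeMin (paperVc g f i).1 f, (paperVc g f i).2)
      else
        (Finset.Icc 1 g \ Finset.Icc 1 (f - (paperVc g f i).1.card),
          (paperVc g f i).2 + 1)) := rfl
  by_cases hcase : f ≤ n
  · rw [hF, hVc, if_pos (by omega), if_pos (by omega)]
    dsimp only
    rw [Finset.sum_sdiff_eq_sub (takeMin_subset _ _)]
    ring
  · rw [hF, hVc, if_neg (by omega), if_neg (by omega)]
    dsimp only
    have hsub : Finset.Icc 1 (f - (paperVc g f i).1.card) ⊆ Finset.Icc 1 g :=
      Finset.Icc_subset_Icc le_rfl (by omega)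
    have hdisj : Disjoint (paperVc g f i).1
        (Finset.Icc 1 (f - (paperVc g f i).1.card)) := by
      rw [Finset.disjoint_left]
      intro k hk hk'
      rw [hV, Finset.mem_Icc] at hk
      rw [hcard, Finset.mem_Icc] at hk'
      omega
    rw [Finset.sum_union hdisj, Finset.sum_sdiff_eq_sub hsub]
    push_cast
    ring

/-- Weighted-sum identity: for every `x : ℕ → ℝ`,
`∑_{i=1}^{g} ∑_{k ∈ F_i} x k = f * ∑_{k=1}^{g} x k`. -/
theorem paperF_weighted_sum (g f : ℕ) (hf : 1 ≤ f) (hfg : f ≤ g) (x : ℕ → ℝ) :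
    ∑ i ∈ Finset.Icc 1 g, ∑ k ∈ paperF g f i, x k =
      (f : ℝ) * ∑ k ∈ Finset.Icc 1 g, x k := by
  set T := ∑ k ∈ Finset.Icc 1 g, x k with hT
  have hgpos : 0 < g := by omega
  have hre : ∑ i ∈ Finset.Icc 1 g, ∑ k ∈ paperF g f i, x k =
      ∑ i ∈ Finset.range g, ∑ k ∈ paperF g f (i + 1), x k := by
    rw [show Finset.Icc 1 g = Finset.Ico 1 (g + 1) from by rw [Finset.Ico_add_one_right_eq_Icc],
      Finset.sum_Ico_eq_sum_range]
    simp only [Nat.add_sub_cancel]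
    exact Finset.sum_congr rfl fun i _ => by rw [Nat.add_comm]
  rw [hre]
  have hstep : ∀ i ∈ Finset.range g, ∑ k ∈ paperF g f (i + 1), x k =
      ((∑ k ∈ (paperVc g f i).1, x k) - (∑ k ∈ (paperVc g f (i + 1)).1, x k)) +
        (((paperVc g f (i + 1)).2 : ℝ) - ((paperVc g f i).2 : ℝ)) * T :=
    fun i _ => paperF_step g f hf hfg x i
  rw [Finset.sum_congr rfl hstep, Finset.sum_add_distrib,
    Finset.sum_range_sub' (fun i => ∑ k ∈ (paperVc g f i).1, x k) g,
    ← Finset.sum_mul, Finset.sum_range_sub (fun i => ((paperVc g f i).2 : ℝ)) g]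
  have h0V : (paperVc g f 0).1 = Finset.Icc 1 g := rfl
  have h0c : (paperVc g f 0).2 = 1 := rfl
  obtain ⟨n, hng, hV, hc⟩ := paperVc_structure g f hf hfg g
  have hkey : (n = 0 ∧ (paperVc g f g).2 = f) ∨
      (n = g ∧ (paperVc g f g).2 = f + 1) := by
    rcases le_or_gt (paperVc g f g).2 f with h | h
    · have h2 : (paperVc g f g).2 * g ≤ f * g := Nat.mul_le_mul_right g h
      have h3 : n = 0 := by nlinarith [hc]
      exact Or.inl ⟨h3, Nat.eq_of_mul_eq_mul_right hgpos (by rw [hc, h3]; ring)⟩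
    · have h2 : (f + 1) * g ≤ (paperVc g f g).2 * g := Nat.mul_le_mul_right g h
      have h3 : n = g := by nlinarith [hc]
      exact Or.inr ⟨h3, Nat.eq_of_mul_eq_mul_right hgpos (by rw [hc, h3]; ring)⟩
  rcases hkey with ⟨hn0, hcg⟩ | ⟨hng', hcg⟩
  · have hVe : (paperVc g f g).1 = ∅ := by
      rw [hV, hn0]
      exact Finset.Icc_eq_empty (by omega)
    rw [h0V, h0c, hVe, hcg, Finset.sum_empty, ← hT]
    ring
  · have hVe : (paperVc g f g).1 = Finset.Icc 1 g := by
      rw [hV]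
      congr 1
      omega
    rw [h0V, h0c, hVe, hcg, ← hT]
    push_cast
    ring
end
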